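/- Let θ > 0 and α, β ≥ 0 be real numbers with αβ < 1, and let (η_k)_{k≥1} be a sequence of positive real numbers satisfying η_k ≥ θ (∑_{i=1}^k η_i^α)^β for every k ≥ 1. Then η_k ≥ θ^{1/(1−αβ)} (αβ + (1−αβ)k)^{β/(1−αβ)} for every k ≥ 1. -/

import Mathlib

open Real

/-- Convex Bernoulli consequence: `F ^ p - F ^ (p-1) ≤ (F - d) ^ p` when `p * d = 1`. -/
lemma aux_convex {F d p : ℝ} (hF : 0 < F) (hd : 0 < d) (hdF : d ≤ F) (hp : 1 ≤ p)
    (hpd : p * d = 1) : F ^ p - F ^ (p - 1) ≤ (F - d) ^ p := by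
  have hs : -1 ≤ -(d / F) := by
    have : d / F ≤ 1 := (div_le_one hF).mpr hdF
    linarith
  have hB := one_add_mul_self_le_rpow_one_add hs hp
  have h1 : 1 + p * -(d / F) = 1 - 1 / F := by
    field_simp
    nlinarith [hpd]
  have h2 : (1 : ℝ) + -(d / F) = (F - d) / F := by field_simp; ring
  rw [h1, h2] at hB
  have hFd : 0 ≤ (F - d) / F := div_nonneg (by linarith) hF.le
  have key : F ^ p * ((F - d) / F) ^ p ≤ (F - d) ^ p + 0 := by
    rw [← Real.mul_rpow hF.le hFd, add_zero]
    rw [mul_div_cancel₀ _ hF.ne']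
  have hFp : 0 < F ^ p := Real.rpow_pos_of_pos hF _
  have : F ^ p * (1 - 1 / F) ≤ F ^ p * ((F - d) / F) ^ p :=
    mul_le_mul_of_nonneg_left hB hFp.le
  have hexp : F ^ p * (1 - 1 / F) = F ^ p - F ^ (p - 1) := by
    rw [Real.rpow_sub hF, Real.rpow_one]
    field_simp
  rw [hexp] at this
  linarith [key, this]

/-- Concave Bernoulli consequence: `M ^ c - T ^ c ≤ c * T ^ (c-1) * (M - T)`. -/
lemma aux_concave {T M c : ℝ} (hT : 0 < T) (hTM : T ≤ M) (hc : 0 ≤ c) (hc1 : c ≤ 1) :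
    M ^ c - T ^ c ≤ c * T ^ (c - 1) * (M - T) := by
  have hs : -1 ≤ (M - T) / T := by
    have : 0 ≤ (M - T) / T := div_nonneg (by linarith) hT.le
    linarith
  have hB := rpow_one_add_le_one_add_mul_self hs hc hc1
  have h2 : (1 : ℝ) + (M - T) / T = M / T := by field_simp; ring
  rw [h2] at hB
  have hM0 : 0 ≤ M / T := by
    apply div_nonneg (by linarith) hT.le
  have key : M ^ c = T ^ c * (M / T) ^ c := by
    rw [← Real.mul_rpow hT.le hM0, mul_div_cancel₀ _ hT.ne']
  have hTc : 0 < T ^ c := Real.rpow_pos_of_pos hT _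
  have h3 : T ^ c * (M / T) ^ c ≤ T ^ c * (1 + c * ((M - T) / T)) :=
    mul_le_mul_of_nonneg_left hB hTc.le
  have h4 : T ^ c * (1 + c * ((M - T) / T)) = T ^ c + c * (T ^ c / T) * (M - T) := by
    field_simp
  have h5 : T ^ c / T = T ^ (c - 1) := by
    rw [Real.rpow_sub hT, Real.rpow_one]
  rw [h4, h5] at h3
  linarith [key ▸ h3]

theorem stmt_1 (θ α β : ℝ) (hθ : 0 < θ) (hα : 0 ≤ α) (hβ : 0 ≤ β) (hαβ : α * β < 1)
    (η : ℕ → ℝ) (hη : ∀ k : ℕ, 1 ≤ k → 0 < η k)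
    (hineq : ∀ k : ℕ, 1 ≤ k → η k ≥ θ * (∑ i ∈ Finset.Icc 1 k, η i ^ α) ^ β) :
    ∀ k : ℕ, 1 ≤ k →
      η k ≥ θ ^ (1 / (1 - α * β)) *
        (α * β + (1 - α * β) * (k : ℝ)) ^ (β / (1 - α * β)) := by
  set c : ℝ := α * β with hc
  set δ : ℝ := 1 - c with hδdef
  have hc0 : 0 ≤ c := mul_nonneg hα hβ
  have hδ : 0 < δ := by rw [hδdef]; linarith
  set g : ℝ := 1 / δ with hg
  set A : ℝ := θ ^ (α / δ) with hA
  have hApos : 0 < A := Real.rpow_pos_of_pos hθ _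
  have hg1 : 1 ≤ g := by
    rw [hg, le_div_iff₀ hδ, one_mul]; rw [hδdef]; linarith
  have hgδ : g * δ = 1 := by rw [hg]; field_simp
  set S : ℕ → ℝ := fun k => ∑ i ∈ Finset.Icc 1 k, η i ^ α with hS
  clear_value S
  clear_value A
  clear_value g
  clear_value δ
  clear_value c
  have hSpos : ∀ k : ℕ, 1 ≤ k → 0 < S k := by
    intro k hk
    rw [hS]
    apply Finset.sum_pos
    · intro i hi
      exact Real.rpow_pos_of_pos (hη i (Finset.mem_Icc.mp hi).1) _
    · exact Finset.nonempty_Icc.mpr hk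
  -- main self-improving inequality: θ^α * (S k)^c ≤ S k - S (k-1)-part
  have hsucc : ∀ k : ℕ, S (k + 1) = S k + η (k + 1) ^ α := by
    intro k
    simp only [hS]
    exact Finset.sum_Icc_succ_top (by omega) _
  have hkey : ∀ k : ℕ, 1 ≤ k → θ ^ α * (S k) ^ c ≤ η k ^ α := by
    intro k hk
    have h1 : θ * (S k) ^ β ≤ η k := by
      simp only [hS]; exact hineq k hk
    have hb : 0 ≤ θ * (S k) ^ β :=
      mul_nonneg hθ.le (Real.rpow_pos_of_pos (hSpos k hk) β).le
    have h2 : (θ * (S k) ^ β) ^ α ≤ η k ^ α := Real.rpow_le_rpow hb h1 hα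
    calc θ ^ α * (S k) ^ c = (θ * (S k) ^ β) ^ α := by
          rw [Real.mul_rpow hθ.le (Real.rpow_pos_of_pos (hSpos k hk) β).le,
            ← Real.rpow_mul (hSpos k hk).le]
          rw [hc, mul_comm β α]
      _ ≤ η k ^ α := h2
  -- exponent arithmetic facts
  have h1c : (1 : ℝ) - c ≠ 0 := by linarith
  have eAc : A ^ c * θ ^ α = A := by
    rw [hA, ← Real.rpow_mul hθ.le, ← Real.rpow_add hθ]
    congr 1
    rw [hδdef]
    field_simp
    ring
  have eAc1 : θ ^ α * A ^ (c - 1) = 1 := by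
    rw [hA, ← Real.rpow_mul hθ.le, ← Real.rpow_add hθ]
    rw [show α + α / δ * (c - 1) = 0 by rw [hδdef]; field_simp; ring]

    exact Real.rpow_zero θ
  -- the main induction
  have main : ∀ k : ℕ, 1 ≤ k → A * (c + δ * k) ^ g ≤ S k := by
    intro k hk
    induction k, hk using Nat.le_induction with
    | base =>
      have hT : 0 < S 1 := hSpos 1 le_rfl
      have h1 : θ ^ α * (S 1) ^ c ≤ S 1 := by
        have := hkey 1 le_rfl
        have hs1 : S 1 = η 1 ^ α := by
          rw [hS]; simp
        linarith [hs1 ▸ this]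
      have h2 : θ ^ α ≤ (S 1) ^ δ := by
        rw [hδdef, Real.rpow_sub hT, Real.rpow_one]
        rw [le_div_iff₀ (Real.rpow_pos_of_pos hT c)]
        linarith
      have h3 : (θ ^ α) ^ g ≤ ((S 1) ^ δ) ^ g :=
        Real.rpow_le_rpow (by positivity) h2 (by positivity)
      rw [← Real.rpow_mul hθ.le, ← Real.rpow_mul hT.le, mul_comm δ g, hgδ,
        Real.rpow_one] at h3
      have e1 : (c + δ * (1 : ℕ)) = 1 := by push_cast; rw [hδdef]; ring
      rw [e1, Real.one_rpow, mul_one]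
      calc A = θ ^ (α * g) := by rw [hA, hg]; congr 1; field_simp
        _ ≤ S 1 := h3
    | succ k hk ih =>
      set T : ℝ := S (k + 1) with hTdef
      clear_value T
      have hT : 0 < T := hTdef ▸ hSpos (k + 1) (by omega)
      have hfk : (1 : ℝ) ≤ c + δ * k := by
        have : (1 : ℝ) ≤ (k : ℝ) := by exact_mod_cast hk
        nlinarith [hδ]
      have hfk1 : (1 : ℝ) ≤ c + δ * (k + 1 : ℕ) := by
        push_cast
        have : (0 : ℝ) ≤ (k : ℝ) := Nat.cast_nonneg k
        nlinarith [hδ]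
      have hfkpos : (0 : ℝ) < c + δ * k := by linarith
      set F : ℝ := c + δ * (k + 1 : ℕ) with hF
      clear_value F
      have hFpos : 0 < F := by linarith
      have hFk : F - δ = c + δ * k := by rw [hF]; push_cast; ring
      -- T ≥ S k + θ^α T^c
      have hTk : S k + θ ^ α * T ^ c ≤ T := by
        have := hkey (k + 1) (by omega)
        rw [← hTdef] at this
        have hs := hsucc k
        rw [← hTdef] at hs
        linarith [this, hs]
      -- S k ≤ T hence bounds
      have hSkT : S k ≤ T := by nlinarith [Real.rpow_pos_of_pos hT c, Real.rpow_pos_of_pos hθ α, hTk]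
      have hAT : A ≤ T := by
        have h1 : (1 : ℝ) ≤ (c + δ * k) ^ g := Real.one_le_rpow hfk (by positivity)
        nlinarith [ih, hApos]
      set M : ℝ := A * F ^ g with hM
      clear_value M
      -- goal : M ≤ T
      by_contra hcon
      push_neg at hcon
      have hMT : T < M := hcon
      -- fact: θ^α * M^c = A * F^(g-1)
      have hgc : g * c = g - 1 := by
        have hδ' : δ ≠ 0 := hδ.ne'
        rw [hg, show c = 1 - δ from by rw [hδdef]; ring]
        field_simp
      have hMc : θ ^ α * M ^ c = A * F ^ (g - 1) := by
        have h1 : M ^ c = A ^ c * F ^ (g - 1) := by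
          rw [hM, Real.mul_rpow hApos.le (Real.rpow_pos_of_pos hFpos g).le,
            ← Real.rpow_mul hFpos.le, hgc]
        rw [h1, ← mul_assoc, mul_comm (θ ^ α) (A ^ c), eAc]
      -- convexity: A * (c + δk)^g ≥ M - θ^α M^c
      have hdF : δ ≤ F := by linarith
      have hconv : F ^ g - F ^ (g - 1) ≤ (F - δ) ^ g := aux_convex hFpos hδ hdF hg1 hgδ
      have hlow : M - θ ^ α * M ^ c ≤ A * (c + δ * k) ^ g := by
        rw [hMc, hM, ← hFk]
        have := mul_le_mul_of_nonneg_left hconv hApos.le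
        linarith [this]
      -- combining with hTk and ih:
      have hcomb : M - T ≤ θ ^ α * (M ^ c - T ^ c) := by
        have h6 : M - θ ^ α * M ^ c ≤ S k := le_trans hlow ih
        have hdist : θ ^ α * (M ^ c - T ^ c) = θ ^ α * M ^ c - θ ^ α * T ^ c := by ring
        linarith [hTk, h6, hdist.ge, hdist.le]
      -- concavity bound
      have hconc : M ^ c - T ^ c ≤ c * T ^ (c - 1) * (M - T) :=
        aux_concave hT hMT.le hc0 (by linarith)
      have hTc1 : T ^ (c - 1) ≤ A ^ (c - 1) :=
        Real.rpow_le_rpow_of_nonpos hApos hAT (by linarith)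
      have hθα : (0 : ℝ) < θ ^ α := Real.rpow_pos_of_pos hθ α
      have hfin : θ ^ α * (M ^ c - T ^ c) ≤ c * (M - T) := by
        have h1 : θ ^ α * (M ^ c - T ^ c) ≤ θ ^ α * (c * T ^ (c - 1) * (M - T)) :=
          mul_le_mul_of_nonneg_left hconc hθα.le
        have h2 : θ ^ α * T ^ (c - 1) ≤ 1 := by
          calc θ ^ α * T ^ (c - 1) ≤ θ ^ α * A ^ (c - 1) :=
                mul_le_mul_of_nonneg_left hTc1 hθα.le
            _ = 1 := eAc1
        have h3 : θ ^ α * (c * T ^ (c - 1) * (M - T)) = c * (M - T) * (θ ^ α * T ^ (c - 1)) := by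
          ring
        have h4 : c * (M - T) * (θ ^ α * T ^ (c - 1)) ≤ c * (M - T) * 1 :=
          mul_le_mul_of_nonneg_left h2 (mul_nonneg hc0 (by linarith))
        linarith [h1, h3.le, h3.ge, h4]
      have h6 : 0 < (1 - c) * (M - T) := mul_pos (by linarith) (by linarith)
      have h7 : (1 - c) * (M - T) = (M - T) - c * (M - T) := by ring
      linarith [hcomb, hfin, h6, h7.le, h7.ge]
  -- conclude
  intro k hk
  have hSk := main k hk
  have h1 : θ * (S k) ^ β ≤ η k := by
    simp only [hS]; exact hineq k hk
  have hfk : (0 : ℝ) < c + δ * k := by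
    have : (1 : ℝ) ≤ (k : ℝ) := by exact_mod_cast hk
    nlinarith [hδ, hc0]
  have h2 : θ * (A * (c + δ * k) ^ g) ^ β ≤ θ * (S k) ^ β := by
    apply mul_le_mul_of_nonneg_left _ hθ.le
    exact Real.rpow_le_rpow (by positivity) hSk hβ
  have h3 : θ * (A * (c + δ * k) ^ g) ^ β =
      θ ^ (1 / δ) * (c + δ * k) ^ (β / δ) := by
    rw [Real.mul_rpow hApos.le (Real.rpow_pos_of_pos hfk g).le,
      ← Real.rpow_mul hfk.le, hA, ← Real.rpow_mul hθ.le]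
    have e1 : α / δ * β = 1 / δ - 1 := by
      rw [hδdef]; field_simp; linarith [hc]
    have e2 : g * β = β / δ := by rw [hg]; ring
    rw [e1, e2, Real.rpow_sub hθ, Real.rpow_one]
    field_simp
  rw [ge_iff_le, hg, ← h3]
  exact le_trans h2 h1
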